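/- Let A = k⟨α₁,…,α_L⟩ be the free unital algebra, and let φ⁻ be the involution with φ⁻(α_{i₁}…α_{i_k}) = (−1)^k α_{i_k}…α_{i₁}. Let s^k_{ij} ∈ k be the structure constants of an associative multiplication on k^L, and let {{-,-}} be the linear double Poisson bracket with {{α_i, α_j}} = Σ_k (s^k_{ij}(α_k ⊗ 1) − s^k_{ji}(1 ⊗ α_k)). Then {{-,-}} is φ⁻-adapted (i.e. (φ⁻⊗φ⁻)({{a,b}}) = {{φ⁻(a),φ⁻(b)}}° for all a,b) if and only if s^k_{ij} = s^k_{ji} for all i,j,k, i.e. the multiplication on k^L is commutative. -/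

import Mathlib

open TensorProduct

noncomputable section

/-- The cyclic permutation `(123)` on a triple tensor product, `x ⊗ y ⊗ z ↦ z ⊗ x ⊗ y`. -/
def cyclicPerm (k V : Type*) [CommRing k] [AddCommGroup V] [Module k V] :
    V ⊗[k] (V ⊗[k] V) →ₗ[k] V ⊗[k] (V ⊗[k] V) :=
  (TensorProduct.comm k (V ⊗[k] V) V).toLinearMap ∘ₗ
    (TensorProduct.assoc k V V V).symm.toLinearMap

/-- For a double bracket `D` and `a : A`, the map `{{a, -}}_L : A ⊗ A → A ⊗ A ⊗ A`. -/
def bracketLeft (k A : Type*) [CommRing k] [Ring A] [Algebra k A]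
    (D : A →ₗ[k] A →ₗ[k] A ⊗[k] A) (a : A) :
    A ⊗[k] A →ₗ[k] A ⊗[k] (A ⊗[k] A) :=
  (TensorProduct.assoc k A A A).toLinearMap ∘ₗ LinearMap.rTensor A (D a)

set_option maxHeartbeats 2000000 in
/-- a linear double Poisson bracket on the free algebra, given by structure
constants `s` of an associative multiplication on `k^L`, is `φ⁻`-adapted
if and only if `s^k_{ij} = s^k_{ji}`, i.e. the multiplication is commutative. -/
theorem linear_bracket_phi_minus_adapted_iff
    (k : Type*) [Field k] [CharZero k] (L : ℕ)
    (s : Fin L → Fin L → Fin L → k)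
    (hassoc : ∀ i j l m : Fin L,
      ∑ p : Fin L, s p i j * s m p l = ∑ p : Fin L, s m i p * s p j l)
    (D : FreeAlgebra k (Fin L) →ₗ[k] FreeAlgebra k (Fin L) →ₗ[k]
      FreeAlgebra k (Fin L) ⊗[k] FreeAlgebra k (Fin L))
    (hskew : ∀ a b, D a b = - (TensorProduct.comm k _ _) (D b a))
    (hleib : ∀ a b c, D a (b * c)
      = LinearMap.lTensor _ (LinearMap.mulRight k c) (D a b)
        + LinearMap.rTensor _ (LinearMap.mulLeft k b) (D a c))
    (hjac : ∀ a b c, bracketLeft k _ D a (D b c)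
        + cyclicPerm k _ (bracketLeft k _ D b (D c a))
        + cyclicPerm k _ (cyclicPerm k _ (bracketLeft k _ D c (D a b))) = 0)
    (hval : ∀ i j : Fin L, D (FreeAlgebra.ι k i) (FreeAlgebra.ι k j)
      = ∑ p : Fin L, (s p i j • (FreeAlgebra.ι k p ⊗ₜ[k] (1 : FreeAlgebra k (Fin L)))
          - s p j i • ((1 : FreeAlgebra k (Fin L)) ⊗ₜ[k] FreeAlgebra.ι k p)))
    (φ : FreeAlgebra k (Fin L) →ₗ[k] FreeAlgebra k (Fin L))
    (hφanti : ∀ x y, φ (x * y) = φ y * φ x)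
    (hφone : φ 1 = 1)
    (hφgen : ∀ i : Fin L, φ (FreeAlgebra.ι k i) = - FreeAlgebra.ι k i) :
    (∀ a b, TensorProduct.map φ φ (D a b) = (TensorProduct.comm k _ _) (D (φ a) (φ b)))
      ↔ (∀ p i j : Fin L, s p i j = s p j i) := by
  classical
  -- abbreviation
  have hcomm : ∀ t : FreeAlgebra k (Fin L) ⊗[k] FreeAlgebra k (Fin L),
      TensorProduct.map φ φ ((TensorProduct.comm k _ _) t)
        = (TensorProduct.comm k _ _) (TensorProduct.map φ φ t) := by
    intro t
    induction t using TensorProduct.induction_on with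
    | zero => simp
    | tmul x y => simp
    | add x y hx hy => simp [hx, hy]
  constructor
  · intro had q i j
    have h := had (FreeAlgebra.ι k i) (FreeAlgebra.ι k j)
    simp only [hφgen, map_neg, LinearMap.neg_apply, neg_neg] at h
    rw [hval] at h
    set ev : FreeAlgebra k (Fin L) →ₐ[k] k :=
      FreeAlgebra.lift k (fun r => if r = q then (1:k) else 0) with hev
    set G : FreeAlgebra k (Fin L) ⊗[k] FreeAlgebra k (Fin L) →ₗ[k] k :=
      LinearMap.mul' k k ∘ₗ TensorProduct.map ev.toLinearMap ev.toLinearMap with hG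
    have h2 := congrArg G h
    simp only [map_sum, map_sub, map_smul, TensorProduct.map_tmul,
      TensorProduct.comm_tmul, hφgen, hφone, hG, LinearMap.coe_comp,
      Function.comp_apply, AlgHom.toLinearMap_apply, LinearMap.mul'_apply,
      map_one, map_neg, hev, FreeAlgebra.lift_ι_apply, smul_eq_mul] at h2
    simp only [Finset.sum_sub_distrib, Finset.sum_ite_eq', Finset.mem_univ,
      if_true, mul_one, one_mul, mul_neg, mul_ite, mul_zero, mul_one,
      neg_neg] at h2
    simp only [Finset.sum_neg_distrib, Finset.sum_ite_eq', Finset.mem_univ, if_true] at h2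
    linear_combination -h2 / 2
  · intro hs
    have hD1 : ∀ a, D a 1 = 0 := by
      intro a
      have h := hleib a 1 1
      have e1 : LinearMap.mulRight k (1 : FreeAlgebra k (Fin L)) = LinearMap.id := by
        ext x; simp
      have e2 : LinearMap.mulLeft k (1 : FreeAlgebra k (Fin L)) = LinearMap.id := by
        ext x; simp
      rw [mul_one, e1, e2] at h
      simp only [LinearMap.lTensor_id, LinearMap.rTensor_id, LinearMap.id_coe, id_eq] at h
      exact left_eq_add.mp h
    have hDalg : ∀ a r, D a (algebraMap k (FreeAlgebra k (Fin L)) r) = 0 := by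
      intro a r
      rw [Algebra.algebraMap_eq_smul_one, map_smul, hD1, smul_zero]
    have hφalg : ∀ r, φ (algebraMap k (FreeAlgebra k (Fin L)) r)
        = algebraMap k (FreeAlgebra k (Fin L)) r := by
      intro r
      rw [Algebra.algebraMap_eq_smul_one, map_smul, hφone]
    have hsym : ∀ a b,
        TensorProduct.map φ φ (D a b) = (TensorProduct.comm k _ _) (D (φ a) (φ b)) →
        TensorProduct.map φ φ (D b a) = (TensorProduct.comm k _ _) (D (φ b) (φ a)) := by
      intro a b hab
      rw [hskew b a, hskew (φ b) (φ a), map_neg, map_neg, hcomm, hab]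
    have hlT : ∀ (c : FreeAlgebra k (Fin L)) (t : FreeAlgebra k (Fin L) ⊗[k] FreeAlgebra k (Fin L)),
        TensorProduct.map φ φ (LinearMap.lTensor _ (LinearMap.mulRight k c) t)
          = LinearMap.lTensor _ (LinearMap.mulLeft k (φ c)) (TensorProduct.map φ φ t) := by
      intro c t
      induction t using TensorProduct.induction_on with
      | zero => simp
      | tmul x y => simp [hφanti]
      | add x y hx hy => simp [hx, hy]
    have hrT : ∀ (b : FreeAlgebra k (Fin L)) (t : FreeAlgebra k (Fin L) ⊗[k] FreeAlgebra k (Fin L)),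
        TensorProduct.map φ φ (LinearMap.rTensor _ (LinearMap.mulLeft k b) t)
          = LinearMap.rTensor _ (LinearMap.mulRight k (φ b)) (TensorProduct.map φ φ t) := by
      intro b t
      induction t using TensorProduct.induction_on with
      | zero => simp
      | tmul x y => simp [hφanti]
      | add x y hx hy => simp [hx, hy]
    have hclT : ∀ (f : FreeAlgebra k (Fin L) →ₗ[k] FreeAlgebra k (Fin L))
        (t : FreeAlgebra k (Fin L) ⊗[k] FreeAlgebra k (Fin L)),
        (TensorProduct.comm k _ _) (LinearMap.lTensor _ f t)
          = LinearMap.rTensor _ f ((TensorProduct.comm k _ _) t) := by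
      intro f t
      induction t using TensorProduct.induction_on with
      | zero => simp
      | tmul x y => simp
      | add x y hx hy => simp [hx, hy]
    have hcrT : ∀ (f : FreeAlgebra k (Fin L) →ₗ[k] FreeAlgebra k (Fin L))
        (t : FreeAlgebra k (Fin L) ⊗[k] FreeAlgebra k (Fin L)),
        (TensorProduct.comm k _ _) (LinearMap.rTensor _ f t)
          = LinearMap.lTensor _ f ((TensorProduct.comm k _ _) t) := by
      intro f t
      induction t using TensorProduct.induction_on with
      | zero => simp
      | tmul x y => simp
      | add x y hx hy => simp [hx, hy]
    have hmul : ∀ a b c : FreeAlgebra k (Fin L),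
        TensorProduct.map φ φ (D a b) = (TensorProduct.comm k _ _) (D (φ a) (φ b)) →
        TensorProduct.map φ φ (D a c) = (TensorProduct.comm k _ _) (D (φ a) (φ c)) →
        TensorProduct.map φ φ (D a (b * c))
          = (TensorProduct.comm k _ _) (D (φ a) (φ (b * c))) := by
      intro a b c hb hc
      rw [hleib a b c, hφanti, hleib (φ a) (φ c) (φ b), map_add, map_add, hlT, hrT,
        hb, hc, hclT, hcrT]
      exact add_comm _ _
    have key : ∀ i j : Fin L,
        TensorProduct.map φ φ (D (FreeAlgebra.ι k i) (FreeAlgebra.ι k j))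
          = (TensorProduct.comm k _ _)
            (D (φ (FreeAlgebra.ι k i)) (φ (FreeAlgebra.ι k j))) := by
      intro i j
      simp only [hφgen, map_neg, LinearMap.neg_apply, neg_neg]
      rw [hval, map_sum, map_sum]
      refine Finset.sum_congr rfl fun p _ => ?_
      rw [hs p i j]
      simp only [map_sub, map_smul, TensorProduct.map_tmul, TensorProduct.comm_tmul,
        hφgen, hφone, TensorProduct.neg_tmul, TensorProduct.tmul_neg, smul_neg]
      abel
    have inner : ∀ (j : Fin L) (a : FreeAlgebra k (Fin L)),
        TensorProduct.map φ φ (D (FreeAlgebra.ι k j) a)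
          = (TensorProduct.comm k _ _) (D (φ (FreeAlgebra.ι k j)) (φ a)) := by
      intro j a
      induction a using FreeAlgebra.induction with
      | grade0 r => rw [hDalg, hφalg, hDalg, map_zero, map_zero]
      | grade1 i => exact key j i
      | mul x y hx hy => exact hmul _ _ _ hx hy
      | add x y hx hy =>
      rw [map_add, map_add, map_add, map_add, hx, hy]
      exact (map_add _ _ _).symm
    intro a b
    induction b using FreeAlgebra.induction with
    | grade0 r => rw [hDalg, hφalg, hDalg, map_zero, map_zero]
    | grade1 j => exact hsym _ _ (inner j a)
    | mul x y hx hy => exact hmul _ _ _ hx hy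
    | add x y hx hy =>
      rw [map_add, map_add, map_add, map_add, hx, hy]
      exact (map_add _ _ _).symm

end
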